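/- For positive integers p and f with p ≥ 5 and 2p − 1 ≤ f ≤ p(p−1)/2, we have (1 + 2(f−p)/(f+p))^(⌈p/2⌉+1) > f − p + 1. -/

import Mathlib

lemma bern2 (u : ℝ) (hu : 0 ≤ u) : ∀ n : ℕ, 1 + n*u + ((n:ℝ)*((n:ℝ)-1)/2)*u^2 ≤ (1+u)^n := by
  intro n
  induction n with
  | zero => norm_num
  | succ k ih =>
    have h1 : (0:ℝ) ≤ 1 + u := by linarith
    have hc : (0:ℝ) ≤ (k:ℝ)*((k:ℝ)-1) := by
      rcases k with _ | m
      · norm_num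
      · push_cast
        nlinarith [Nat.cast_nonneg (α := ℝ) m]
    have key : (1 + (k:ℝ)*u + ((k:ℝ)*((k:ℝ)-1)/2)*u^2)*(1+u) ≤ (1+u)^(k+1) := by
      rw [pow_succ]; exact mul_le_mul_of_nonneg_right ih h1
    calc 1 + ((k+1:ℕ):ℝ)*u + (((k+1:ℕ):ℝ)*(((k+1:ℕ):ℝ)-1)/2)*u^2
        ≤ (1 + (k:ℝ)*u + ((k:ℝ)*((k:ℝ)-1)/2)*u^2)*(1+u) := by
          push_cast
          nlinarith [mul_nonneg (mul_nonneg hc hu) (mul_nonneg hu hu)]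
      _ ≤ (1+u)^(k+1) := key

lemma L0 : ∀ p : ℕ, 5 ≤ p → (p:ℝ) < (11/7:ℝ)^((p+3)/2) := by
  intro p
  induction p using Nat.strong_induction_on with
  | _ p ih =>
    intro hp
    rcases le_or_gt p 6 with h6 | h7
    · interval_cases p <;> norm_num
    · have hp2 : 5 ≤ p - 2 := by omega
      have ihp := ih (p-2) (by omega) hp2
      have hexp : (p+3)/2 = ((p-2)+3)/2 + 1 := by omega
      have hcast : ((p-2:ℕ):ℝ) = (p:ℝ) - 2 := by
        have : (2:ℕ) ≤ p := by omega
        push_cast [Nat.cast_sub this]; ring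
      rw [hcast] at ihp
      rw [hexp, pow_succ]
      have hP7 : (7:ℝ) ≤ (p:ℝ) := by exact_mod_cast h7
      nlinarith [ihp, pow_pos (by norm_num : (0:ℝ) < 11/7) (((p-2)+3)/2)]

-- endpoint s = 0 :  (3P-1)(5P-3) ≤ 4NP²
lemma ep0 (P N : ℝ) (hP : 5 ≤ P) (hN : P + 2 ≤ 2*N) :
    (3*P-1)*(5*P-3) ≤ 4*N*P^2 := by
  nlinarith [mul_nonneg (by linarith : (0:ℝ) ≤ 2*N-(P+2)) (sq_nonneg P),
    mul_nonneg (by linarith : (0:ℝ) ≤ P-5) (by nlinarith [sq_nonneg P] : (0:ℝ) ≤ 2*P^2 - P + 9)]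

-- endpoint s = M = (P²-5P+2)/2, D = (P²+P)/2, times 4:
lemma epM (P N : ℝ) (hP : 5 ≤ P) (hN : P + 2 ≤ 2*N) :
    ((5*P-3)*(P^2+P))^2 ≤ 8*N*P^2*(5*P-3)*(P^2+P) + 8*N*(N-1)*P^3*(P^2-5*P+2) := by
  have hN2 : (0:ℝ) ≤ 2*N - (P+2) := by linarith
  have hM : (0:ℝ) ≤ P^2 - 5*P + 2 := by nlinarith
  have hNN : (P+2)*P/4 ≤ N*(N-1) := by nlinarith
  -- reduce to polynomial in P:
  have hpoly : ((5*P-3)*(P^2+P))^2 ≤ 8*((P+2)/2)*P^2*(5*P-3)*(P^2+P) + 8*((P+2)*P/4)*P^3*(P^2-5*P+2) := by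
    nlinarith [mul_nonneg (by linarith : (0:ℝ) ≤ P - 5) (by positivity : (0:ℝ) ≤ P^4), sq_nonneg P, mul_nonneg (by linarith : (0:ℝ) ≤ P-5) (by positivity : (0:ℝ) ≤ P^3), mul_nonneg (by linarith : (0:ℝ) ≤ P-5) (by positivity : (0:ℝ) ≤ P^2)]
  nlinarith [mul_nonneg hN2 (mul_nonneg (by nlinarith : (0:ℝ) ≤ P^2*(5*P-3)) (by nlinarith : (0:ℝ) ≤ P^2+P)),
    mul_nonneg (by linarith [hNN] : (0:ℝ) ≤ N*(N-1) - (P+2)*P/4) (mul_nonneg (by positivity) hM)]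

lemma keyT (P N s : ℝ) (hP : 5 ≤ P) (hN : P + 2 ≤ 2*N) (hs : 0 ≤ s)
    (hsM : 2*s ≤ P^2 - 5*P + 2) :
    ((s+3*P-1)*(5*P-3))^2 ≤ 4*N*P^2*((s+3*P-1)*(5*P-3)) + 8*N*(N-1)*P^3*s := by
  have hK : (0:ℝ) < 5*P-3 := by linarith
  have h31 : (0:ℝ) < 3*P-1 := by linarith
  have hW : (0:ℝ) < P^2 - 5*P + 2 := by nlinarith
  have hT0 : (0:ℝ) ≤ ((3*P-1)*(5*P-3)) * (4*N*P^2 - (3*P-1)*(5*P-3)) :=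
    mul_nonneg (by positivity) (by linarith [ep0 P N hP hN])
  have hTM : (0:ℝ) ≤ 8*N*P^2*(5*P-3)*(P^2+P) + 8*N*(N-1)*P^3*(P^2-5*P+2) - ((5*P-3)*(P^2+P))^2 := by
    linarith [epM P N hP hN]
  have hMs : (0:ℝ) ≤ (P^2-5*P+2) - 2*s := by linarith
  have hA : (0:ℝ) ≤ ((P^2-5*P+2) - 2*s) * (((3*P-1)*(5*P-3)) * (4*N*P^2 - (3*P-1)*(5*P-3))) :=
    mul_nonneg hMs hT0
  have hB : (0:ℝ) ≤ s * (8*N*P^2*(5*P-3)*(P^2+P) + 8*N*(N-1)*P^3*(P^2-5*P+2) - ((5*P-3)*(P^2+P))^2) :=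
    mul_nonneg hs hTM
  have hC : (0:ℝ) ≤ (s * ((P^2-5*P+2) - 2*s)) * ((P^2-5*P+2)*(5*P-3)^2) :=
    mul_nonneg (mul_nonneg hs hMs) (mul_nonneg hW.le (sq_nonneg _))
  have hD : (0:ℝ) ≤ 2*s*(8*N*(N-1)*P^3*(P^2-5*P+2)) := by
    have hN1 : (1:ℝ) ≤ N := by linarith
    have : (0:ℝ) ≤ N*(N-1) := by nlinarith
    nlinarith [mul_nonneg (mul_nonneg hs this) (mul_nonneg (by positivity : (0:ℝ) ≤ P^3) hW.le)]
  have hid : 4*(P^2-5*P+2)*((4*N*P^2*((s+3*P-1)*(5*P-3)) + 8*N*(N-1)*P^3*s) - ((s+3*P-1)*(5*P-3))^2)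
      = 4*(((P^2-5*P+2) - 2*s) * (((3*P-1)*(5*P-3)) * (4*N*P^2 - (3*P-1)*(5*P-3))))
        + 2*(s * (8*N*P^2*(5*P-3)*(P^2+P) + 8*N*(N-1)*P^3*(P^2-5*P+2) - ((5*P-3)*(P^2+P))^2))
        + 2*s*(8*N*(N-1)*P^3*(P^2-5*P+2))
        + 2*((s * ((P^2-5*P+2) - 2*s)) * ((P^2-5*P+2)*(5*P-3)^2)) := by ring
  nlinarith [hA, hB, hC, hD, hid, hW]

theorem stmt_0 (p f : ℕ) (hp0 : 0 < p) (hf0 : 0 < f) (hp : 5 ≤ p)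
    (hf1 : 2 * p - 1 ≤ f) (hf2 : f ≤ p.choose 2) :
    ((f : ℝ) - p + 1) < (1 + 2 * ((f : ℝ) - p) / ((f : ℝ) + p)) ^ (⌈(p : ℝ) / 2⌉₊ + 1) := by
  set c := ⌈(p : ℝ) / 2⌉₊ with hc_def
  have hce : (p:ℝ)/2 ≤ (c:ℝ) := Nat.le_ceil _
  have h2c : p ≤ 2*c := by exact_mod_cast (by linarith : (p:ℝ) ≤ 2*(c:ℝ))
  have hnexp : (p+3)/2 ≤ c+1 := by omega
  have hL : (p:ℝ) < (11/7:ℝ)^(c+1) :=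
    lt_of_lt_of_le (L0 p hp) (pow_le_pow_right₀ (by norm_num) hnexp)
  -- bound from choose
  have h2f : 2*f ≤ p*(p-1) := by
    have h := Nat.choose_two_right p
    have hev : Even (p*(p-1)) := by
      have := Nat.even_mul_succ_self (p-1)
      have hpp : (p-1)+1 = p := by omega
      rw [hpp] at this
      rwa [Nat.mul_comm]
    have hdvd : 2 ∣ p*(p-1) := hev.two_dvd
    have hcancel : 2 * (p*(p-1)/2) = p*(p-1) := Nat.mul_div_cancel' hdvd
    have h1 : f ≤ p*(p-1)/2 := h ▸ hf2
    omega
  have hP5 : (5:ℝ) ≤ (p:ℝ) := by exact_mod_cast hp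
  have hF1 : 2*(p:ℝ) ≤ (f:ℝ)+1 := by exact_mod_cast (by omega : 2*p ≤ f+1)
  have hreal : 2*(f:ℝ) ≤ (p:ℝ)^2 - (p:ℝ) := by
    have : ((2*f:ℕ):ℝ) ≤ ((p*(p-1):ℕ):ℝ) := by exact_mod_cast h2f
    push_cast [Nat.cast_sub (by omega : 1 ≤ p)] at this
    nlinarith [this]
  set P := (p:ℝ) with hP_def
  set F := (f:ℝ) with hF_def
  set s := F - 2*P + 1 with hs_def
  have hs : (0:ℝ) ≤ s := by rw [hs_def]; linarith
  have hsM : 2*s ≤ P^2 - 5*P + 2 := by rw [hs_def]; linarith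
  have hN : P + 2 ≤ 2*((c:ℝ)+1) := by linarith
  set N := (c:ℝ)+1 with hN_def
  have hT := keyT P N s hP5 hN hs hsM
  have hFP : (0:ℝ) < F + P := by linarith
  have hDeq : s + 3*P - 1 = F + P := by rw [hs_def]; ring
  rw [hDeq] at hT
  have hK : (0:ℝ) < 5*P - 3 := by linarith
  have h31 : (0:ℝ) < 3*P - 1 := by linarith
  have hPpos : (0:ℝ) < P := by linarith
  set u := 4*P*s/((F+P)*(5*P-3)) with hu_def
  have hu : (0:ℝ) ≤ u := by
    rw [hu_def]
    exact div_nonneg (by positivity) (by positivity)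
  -- Claim C
  have hC : s/P ≤ N*u + (N*(N-1)/2)*u^2 := by
    have hident : N*u + (N*(N-1)/2)*u^2 - s/P
        = s*((4*N*P^2*((F+P)*(5*P-3)) + 8*N*(N-1)*P^3*s) - ((F+P)*(5*P-3))^2)
          / (P*((F+P)*(5*P-3))^2) := by
      have hK' : P*5-3 ≠ 0 := by linarith
      rw [hu_def]; field_simp [hK', hFP.ne', hPpos.ne']; ring
    have hnn : (0:ℝ) ≤ s*((4*N*P^2*((F+P)*(5*P-3)) + 8*N*(N-1)*P^3*s) - ((F+P)*(5*P-3))^2)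
          / (P*((F+P)*(5*P-3))^2) := by
      apply div_nonneg (mul_nonneg hs (by linarith)) (by positivity)
    linarith [hident ▸ hnn]
  set b₀ := (5*P-3)/(3*P-1) with hb0_def
  have hb0pos : (0:ℝ) < b₀ := div_pos hK h31
  have h117 : (11/7:ℝ) ≤ b₀ := by
    rw [hb0_def, le_div_iff₀ h31]; linarith
  have hb0n : P < b₀^(c+1) :=
    lt_of_lt_of_le hL (pow_le_pow_left₀ (by norm_num) h117 (c+1))
  have hbase : 1 + 2*(F - P)/(F + P) = b₀*(1+u) := by
    have hK' : P*5-3 ≠ 0 := by linarith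
    have h31' : P*3-1 ≠ 0 := by linarith
    rw [hb0_def, hu_def, hs_def]
    field_simp [hK', h31', hFP.ne']
    ring
  rw [hbase, mul_pow]
  have hbern : 1 + N*u + (N*(N-1)/2)*u^2 ≤ (1+u)^(c+1) := by
    have := bern2 u hu (c+1)
    push_cast at this
    rw [hN_def]
    convert this using 3
  have hq : (F - P + 1)/P = 1 + s/P := by
    rw [hs_def]; field_simp; ring
  have hqpos : (0:ℝ) < (F - P + 1)/P := by
    apply div_pos (by linarith) hPpos
  calc F - P + 1 = P * ((F - P + 1)/P) := by field_simp
    _ < b₀^(c+1) * ((F - P + 1)/P) := by exact mul_lt_mul_of_pos_right hb0n hqpos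
    _ ≤ b₀^(c+1) * (1 + N*u + (N*(N-1)/2)*u^2) := by
        apply mul_le_mul_of_nonneg_left _ (pow_nonneg hb0pos.le _)
        rw [hq]; linarith
    _ ≤ b₀^(c+1) * (1+u)^(c+1) :=
        mul_le_mul_of_nonneg_left hbern (pow_nonneg hb0pos.le _)
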